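/- arXiv:2408.06977 — 2 statements merged into one kernel-verified Lean document; each statement's English description precedes it below -/
import Mathlib

section
/- Let Z be a real random variable with nondegenerate distribution such that Z and Z² are not almost surely affinely related (e.g., Z standard normal). Let V be independent of Z with positive variance, D = Z² + V, and η = V. Then the only vector (c₀, c₁, c₂, c₃) with c₀ + c₁Z + c₂D + c₃η = 0 almost surely is the zero vector. -/
open MeasureTheory ProbabilityTheory

/-- If the first stage is nonlinear, `D = Z² + V` with `η = V`, `Z` not a.s. affinely related
to `Z²`, `V` independent of `Z` with positive variance, then `(1, Z, D, η)` are linearly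
independent: only the zero vector gives an a.s. vanishing linear combination. -/
theorem nonlinear_first_stage_identification
    {Ω : Type*} [MeasurableSpace Ω] (μ : Measure Ω) [IsProbabilityMeasure μ]
    (Z V : Ω → ℝ) (hZ : Measurable Z) (hVmeas : Measurable V)
    (hindep : IndepFun Z V μ)
    (hvar : 0 < variance V μ) (hV2 : MemLp V 2 μ) (hZ4 : MemLp Z 4 μ)
    (hnoaffine : ¬ ∃ p q r : ℝ, (p, q, r) ≠ (0, 0, 0) ∧
      ∀ᵐ ω ∂μ, p + q * Z ω + r * (Z ω) ^ 2 = 0)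
    (D η : Ω → ℝ)
    (hD : ∀ ω, D ω = (Z ω) ^ 2 + V ω) (hη : ∀ ω, η ω = V ω) :
    ∀ c₀ c₁ c₂ c₃ : ℝ,
      (∀ᵐ ω ∂μ, c₀ + c₁ * Z ω + c₂ * D ω + c₃ * η ω = 0) →
      c₀ = 0 ∧ c₁ = 0 ∧ c₂ = 0 ∧ c₃ = 0 := by
  intro c₀ c₁ c₂ c₃ h
  set a : ℝ := c₂ + c₃ with ha
  have hcomb : ∀ᵐ ω ∂μ, c₀ + c₁ * Z ω + c₂ * (Z ω) ^ 2 + a * V ω = 0 := by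
    filter_upwards [h] with ω hω
    rw [hD, hη] at hω
    rw [ha]
    linear_combination hω
  -- f is the polynomial of Z
  set f : ℝ → ℝ := fun z => -(c₀ + c₁ * z + c₂ * z ^ 2) with hf
  have hfmeas : Measurable f := by fun_prop
  have hindep1 : IndepFun (f ∘ Z) V μ := hindep.comp hfmeas measurable_id
  have haeq : (f ∘ Z) =ᵐ[μ] (fun ω => a * V ω) := by
    filter_upwards [hcomb] with ω hω
    simp only [hf, Function.comp_apply]
    linarith
  have hindep2 : IndepFun (fun ω => a * V ω) V μ :=
    hindep1.congr haeq (Filter.EventuallyEq.refl _ V)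
  have hVsm : AEStronglyMeasurable V μ := hVmeas.aestronglyMeasurable
  have haVsm : AEStronglyMeasurable (fun ω => a * V ω) μ :=
    (hVmeas.const_mul a).aestronglyMeasurable
  have hmul := hindep2.integral_mul_eq_mul_integral haVsm hVsm
  have hInt : ∫ ω, ((fun ω => a * V ω) * V) ω ∂μ = a * ∫ ω, (V ω) ^ 2 ∂μ := by
    rw [← integral_const_mul]
    congr 1
    ext ω
    simp [Pi.mul_apply]
    ring
  have hInt2 : ∫ ω, a * V ω ∂μ = a * ∫ ω, V ω ∂μ := integral_const_mul a V
  have hvar' : variance V μ = ∫ ω, (V ω) ^ 2 ∂μ - (∫ ω, V ω ∂μ) ^ 2 := variance_eq_sub hV2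
  have ha0 : a = 0 := by
    by_contra hane
    have : a * variance V μ = 0 := by
      rw [hvar']
      have := hmul
      rw [hInt, hInt2] at this
      ring_nf
      ring_nf at this
      linarith
    rcases mul_eq_zero.mp this with h' | h'
    · exact hane h'
    · exact absurd h' (ne_of_gt hvar)
  have hpoly : ∀ᵐ ω ∂μ, c₀ + c₁ * Z ω + c₂ * (Z ω) ^ 2 = 0 := by
    filter_upwards [hcomb] with ω hω
    rw [ha0] at hω
    linarith
  have hzero : (c₀, c₁, c₂) = (0, 0, 0) := by
    by_contra hne
    exact hnoaffine ⟨c₀, c₁, c₂, hne, hpoly⟩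
  obtain ⟨h0, h1, h2⟩ : c₀ = 0 ∧ c₁ = 0 ∧ c₂ = 0 := by
    simpa [Prod.ext_iff] using hzero
  refine ⟨h0, h1, h2, ?_⟩
  have : c₂ + c₃ = 0 := ha0
  linarith
end

section
/- For y ∈ {0,1}, the probit log-likelihood contribution ℓ(t) = y·log Φ(t) + (1-y)·log(1 - Φ(t)) is strictly concave in t, where Φ is the standard normal cdf. -/
open MeasureTheory ProbabilityTheory Real Set Filter

noncomputable def stdP (x : ℝ) : ℝ := (Real.sqrt (2 * π))⁻¹ * Real.exp (-x ^ 2 / 2)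

lemma stdP_eq : stdP = gaussianPDFReal 0 1 := by
  ext x
  simp [stdP, gaussianPDFReal]

lemma stdP_pos (x : ℝ) : 0 < stdP x := by
  unfold stdP; positivity

lemma continuous_stdP : Continuous stdP := by
  unfold stdP
  fun_prop

lemma integrable_stdP : Integrable stdP := by
  rw [stdP_eq]; exact integrable_gaussianPDFReal 0 1

lemma hasDerivAt_stdP (x : ℝ) : HasDerivAt stdP (-x * stdP x) x := by
  have h1 : HasDerivAt (fun x : ℝ => -x ^ 2 / 2) (-x) x := by
    have := ((hasDerivAt_pow 2 x).neg).div_const 2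
    convert this using 1
    any_goals rfl
    ring
  have := (h1.exp).const_mul (Real.sqrt (2 * π))⁻¹
  convert this using 1
  any_goals rfl
  unfold stdP
  ring

lemma integrable_mul_stdP : Integrable (fun x => x * stdP x) := by
  have h : Integrable (fun x : ℝ => x ^ (1 : ℝ) * Real.exp (-(1/2 : ℝ) * x ^ 2)) :=
    integrable_rpow_mul_exp_neg_mul_sq (by norm_num) (by norm_num)
  have h2 := h.const_mul (Real.sqrt (2 * π))⁻¹
  apply h2.congr
  filter_upwards with x
  rw [Real.rpow_one]
  unfold stdP
  ring_nf

lemma integrable_neg_mul_stdP : Integrable (fun x : ℝ => -x * stdP x) := by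
  exact integrable_mul_stdP.neg.congr
    (Filter.Eventually.of_forall fun x => by simp [neg_mul])

lemma tendsto_stdP_atBot : Tendsto stdP atBot (nhds 0) := by
  have h2 : Tendsto (fun x : ℝ => x ^ 2) atBot atTop := by
    have h := (tendsto_pow_atTop (α := ℝ) (n := 2) (by norm_num)).comp tendsto_neg_atBot_atTop
    simpa [Function.comp_def, neg_sq] using h
  have h1 : Tendsto (fun x : ℝ => -x ^ 2 / 2) atBot atBot := by
    have h3 := (Filter.tendsto_neg_atTop_atBot.comp h2).atBot_div_const
      (by norm_num : (0:ℝ) < 2)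
    simpa [Function.comp_def] using h3
  have h5 := Real.tendsto_exp_atBot.comp h1
  have h6 := h5.const_mul (Real.sqrt (2 * π))⁻¹
  rw [mul_zero] at h6
  exact h6.congr fun x => by simp [stdP, Function.comp_def]

noncomputable def stdCDF (t : ℝ) : ℝ := ∫ x in Iic t, stdP x

lemma cdf_eq_stdCDF (t : ℝ) : cdf (gaussianReal 0 1) t = stdCDF t := by
  rw [cdf_eq_real, measureReal_def, gaussianReal_apply_eq_integral 0 one_ne_zero,
    ENNReal.toReal_ofReal]
  · rw [stdCDF, stdP_eq]
  · exact setIntegral_nonneg measurableSet_Iic fun x _ => gaussianPDFReal_nonneg 0 1 x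

lemma stdCDF_eq (t : ℝ) : stdCDF t = stdCDF 0 + ∫ x in (0:ℝ)..t, stdP x := by
  rw [← intervalIntegral.integral_Iic_sub_Iic integrable_stdP.integrableOn
    integrable_stdP.integrableOn]
  unfold stdCDF
  ring

lemma hasDerivAt_stdCDF (t : ℝ) : HasDerivAt stdCDF (stdP t) t := by
  have h : HasDerivAt (fun u => stdCDF 0 + ∫ x in (0:ℝ)..u, stdP x) (stdP t) t := by
    refine HasDerivAt.const_add _ ?_
    exact intervalIntegral.integral_hasDerivAt_right
      integrable_stdP.intervalIntegrable
      (continuous_stdP.stronglyMeasurableAtFilter _ _)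
      continuous_stdP.continuousAt
  have heq : stdCDF = fun u => stdCDF 0 + ∫ x in (0:ℝ)..u, stdP x := funext stdCDF_eq
  rw [heq]
  exact h

lemma stdCDF_pos (t : ℝ) : 0 < stdCDF t := by
  have h1 : 0 ≤ stdCDF (t - 1) :=
    setIntegral_nonneg measurableSet_Iic fun x _ => (stdP_pos x).le
  have h2 : stdCDF t - stdCDF (t - 1) = ∫ x in (t-1)..t, stdP x :=
    (intervalIntegral.integral_Iic_sub_Iic integrable_stdP.integrableOn
      integrable_stdP.integrableOn)
  have h3 : 0 < ∫ x in (t-1)..t, stdP x :=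
    intervalIntegral.intervalIntegral_pos_of_pos
      integrable_stdP.intervalIntegrable (fun x => stdP_pos x) (by linarith)
  linarith

lemma integral_neg_mul_stdP (t : ℝ) : ∫ x in Iic t, (-x * stdP x) = stdP t := by
  have := integral_Iic_of_hasDerivAt_of_tendsto' (a := t) (f := stdP)
    (f' := fun x => -x * stdP x) (m := 0)
    (fun x _ => hasDerivAt_stdP x)
    integrable_neg_mul_stdP.integrableOn
    tendsto_stdP_atBot
  simpa using this

lemma mills (t : ℝ) (ht : t < 0) : -t * stdCDF t ≤ stdP t := by
  have key : ∫ x in Iic t, -t * stdP x ≤ ∫ x in Iic t, -x * stdP x := by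
    apply setIntegral_mono_on
    · exact (integrable_stdP.const_mul (-t)).integrableOn
    · exact integrable_neg_mul_stdP.integrableOn
    · exact measurableSet_Iic
    · intro x hx
      have hx' : x ≤ t := hx
      exact mul_le_mul_of_nonneg_right (by linarith) (stdP_pos x).le
  rw [integral_neg_mul_stdP] at key
  calc -t * stdCDF t = ∫ x in Iic t, -t * stdP x := by
        rw [stdCDF, integral_const_mul]
    _ ≤ stdP t := key

lemma hasDerivAt_g (x : ℝ) :
    HasDerivAt (fun t => t * stdCDF t + stdP t) (stdCDF x) x := by
  have h := ((hasDerivAt_id x).mul (hasDerivAt_stdCDF x)).add (hasDerivAt_stdP x)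
  convert h using 1
  any_goals rfl
  simp only [id_eq]
  ring

lemma g_pos (t : ℝ) : 0 < t * stdCDF t + stdP t := by
  have hmono : StrictMono (fun t => t * stdCDF t + stdP t) :=
    strictMono_of_deriv_pos fun x => by
      rw [(hasDerivAt_g x).deriv]; exact stdCDF_pos x
  have hs : min t 0 - 1 < 0 := by
    have := min_le_right t 0; linarith
  have hst : min t 0 - 1 < t := by
    have := min_le_left t 0; linarith
  have h0 := mills _ hs
  have h1 : (min t 0 - 1) * stdCDF (min t 0 - 1) + stdP (min t 0 - 1)
      < t * stdCDF t + stdP t := hmono hst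
  linarith

noncomputable def stdL (t : ℝ) : ℝ := Real.log (stdCDF t)

lemma hasDerivAt_stdL (t : ℝ) : HasDerivAt stdL (stdP t / stdCDF t) t := by
  have := (Real.hasDerivAt_log (stdCDF_pos t).ne').comp t (hasDerivAt_stdCDF t)
  convert this using 1
  any_goals rfl
  field_simp

lemma strictConcave_stdL : StrictConcaveOn ℝ Set.univ stdL := by
  apply strictConcaveOn_univ_of_deriv2_neg
  · have : Continuous stdCDF := by
      have : Differentiable ℝ stdCDF := fun x => (hasDerivAt_stdCDF x).differentiableAt
      exact this.continuous
    exact this.log fun x => (stdCDF_pos x).ne'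
  · intro x
    have hd1 : deriv stdL = fun t => stdP t / stdCDF t := by
      funext t; exact (hasDerivAt_stdL t).deriv
    have hd2 : HasDerivAt (fun t => stdP t / stdCDF t)
        ((-x * stdP x * stdCDF x - stdP x * stdP x) / (stdCDF x) ^ 2) x :=
      (hasDerivAt_stdP x).div (hasDerivAt_stdCDF x) (stdCDF_pos x).ne'
    have : deriv^[2] stdL x = (-x * stdP x * stdCDF x - stdP x * stdP x) / (stdCDF x) ^ 2 := by
      show deriv (deriv stdL) x = _
      rw [hd1, hd2.deriv]
    rw [this]
    apply div_neg_of_neg_of_pos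
    · have h1 := g_pos x
      have h2 := stdP_pos x
      nlinarith
    · exact pow_pos (stdCDF_pos x) 2

lemma stdCDF_neg (t : ℝ) : stdCDF (-t) = 1 - stdCDF t := by
  have heven : ∀ x : ℝ, stdP (-x) = stdP x := by
    intro x; simp [stdP]
  have h1 : stdCDF (-t) = ∫ x in Ioi t, stdP x := by
    rw [stdCDF]
    rw [show (∫ x in Iic (-t), stdP x) = ∫ x in Iic (-t), stdP (-x) from
      integral_congr_ae (Filter.Eventually.of_forall fun x => (heven x).symm)]
    rw [integral_comp_neg_Iic]
    norm_num
  have h2 : stdCDF t + (∫ x in Ioi t, stdP x) = ∫ x, stdP x :=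
    intervalIntegral.integral_Iic_add_Ioi integrable_stdP.integrableOn integrable_stdP.integrableOn
  have h3 : (∫ x, stdP x) = 1 := by
    rw [stdP_eq]; exact integral_gaussianPDFReal_eq_one 0 one_ne_zero
  rw [h1]
  linarith

/-- For `y ∈ {0,1}`, the probit log-likelihood contribution
`ℓ(t) = y log Φ(t) + (1-y) log(1 - Φ(t))` is strictly concave in `t`, where `Φ` is the
standard normal cdf. -/
theorem probit_loglik_strictConcave
    (Φ : ℝ → ℝ) (hΦ : ∀ t, Φ t = cdf (gaussianReal 0 1) t)
    (y : ℝ) (hy : y = 0 ∨ y = 1)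
    (ℓ : ℝ → ℝ)
    (hℓ : ∀ t, ℓ t = y * Real.log (Φ t) + (1 - y) * Real.log (1 - Φ t)) :
    StrictConcaveOn ℝ Set.univ ℓ := by
  have hΦ' : ∀ t, Φ t = stdCDF t := fun t => (hΦ t).trans (cdf_eq_stdCDF t)
  rcases hy with rfl | rfl
  · have hℓ' : ℓ = fun t => stdL (-t) := by
      funext t
      rw [hℓ t, hΦ' t, stdL, stdCDF_neg]
      ring
    rw [hℓ']
    obtain ⟨hc, h⟩ := strictConcave_stdL
    constructor
    · exact convex_univ
    · intro x _ z _ hxz a b ha hb hab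
      have hxz' : (-x : ℝ) ≠ -z := fun h' => hxz (by linarith [neg_injective h'])
      have := h (Set.mem_univ (-x)) (Set.mem_univ (-z)) hxz' ha hb hab
      have heq : a • (-x) + b • (-z) = -(a • x + b • z) := by
        simp [smul_eq_mul]; ring
      rwa [heq] at this
  · have hℓ' : ℓ = stdL := by
      funext t
      rw [hℓ t, hΦ' t, stdL]
      ring
    rw [hℓ']
    exact strictConcave_stdL
end
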